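/- Let N1 and N2 be state machine decomposable, safe marked Petri nets related by an α-morphism φ : N1 → N2. If N1 is a GWF-net with initial marking m0^1 and final marking mf^1, then N2 is a GWF-net with initial marking m0^2=φ(m0^1) and final marking mf^2=φ(mf^1); in particular, every place of m0^2 has empty preset, every place of φ(mf^1) has empty postset, and every node of N2 lies on a directed path from some place of m0^2 to some place of φ(mf^1). -/

import Mathlib

open Classical

namespace PNets

/-- A (marked) Petri net: places, transitions, flow relation, initial and final markings
(markings of safe nets are treated as subsets of places). -/
structure Net (X : Type) where
  P : Set X
  T : Set X
  F : Set (X × X)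
  m0 : Set X
  mf : Set X

variable {X Y Z W C S : Type}

def pre (N : Net X) (x : X) : Set X := {y | (y, x) ∈ N.F}

def post (N : Net X) (x : X) : Set X := {y | (x, y) ∈ N.F}

def nodes (N : Net X) : Set X := N.P ∪ N.T

/-- Standing assumptions on Petri nets. -/
structure IsNet (N : Net X) : Prop where
  disj : Disjoint N.P N.T
  flow_sub : N.F ⊆ (N.P ×ˢ N.T) ∪ (N.T ×ˢ N.P)
  no_isolated : ∀ x ∈ nodes N, (pre N x).Nonempty ∨ (post N x).Nonempty
  t_pre : ∀ t ∈ N.T, (pre N t).Nonempty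
  t_post : ∀ t ∈ N.T, (post N t).Nonempty
  no_selfloop : ∀ x y, (x, y) ∈ N.F → (y, x) ∉ N.F

/-! ### Set (safe) semantics -/

def enabled (N : Net X) (m : Set X) (t : X) : Prop := t ∈ N.T ∧ pre N t ⊆ m

def fires (N : Net X) (m : Set X) (t : X) (m' : Set X) : Prop :=
  enabled N m t ∧ m' = (m \ pre N t) ∪ post N t

def step (N : Net X) (m m' : Set X) : Prop := ∃ t, fires N m t m'

def reachable (N : Net X) (m : Set X) : Set (Set X) :=
  {m' | Relation.ReflTransGen (step N) m m'}

def seqFires (N : Net X) : Set X → List X → Set X → Prop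
  | m, [], m' => m' = m
  | m, t :: w, m' => ∃ m1, fires N m t m1 ∧ seqFires N m1 w m'

/-! ### Multiset semantics (used for safety) -/

def firesM (N : Net X) (m : X → ℕ) (t : X) (m' : X → ℕ) : Prop :=
  t ∈ N.T ∧ (∀ p ∈ pre N t, 1 ≤ m p) ∧
    ∀ p, m' p = m p - (pre N t).indicator (fun _ => 1) p
                  + (post N t).indicator (fun _ => 1) p

def stepM (N : Net X) (m m' : X → ℕ) : Prop := ∃ t, firesM N m t m'

def reachableM (N : Net X) (m : X → ℕ) : Set (X → ℕ) :=
  {m' | Relation.ReflTransGen (stepM N) m m'}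

def seqFiresM (N : Net X) : (X → ℕ) → List X → (X → ℕ) → Prop
  | m, [], m' => m' = m
  | m, t :: w, m' => ∃ m1, firesM N m t m1 ∧ seqFiresM N m1 w m'

noncomputable def initM (N : Net X) : X → ℕ := N.m0.indicator fun _ => 1

/-- A marked net is safe if every reachable marking puts at most one token on each place. -/
def Safe (N : Net X) : Prop := ∀ m ∈ reachableM N (initM N), ∀ p, m p ≤ 1

/-! ### Generalized workflow nets and soundness -/

def pathRel (N : Net X) : X → X → Prop :=
  fun x y => Relation.ReflTransGen (fun a b => (a, b) ∈ N.F) x y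

structure IsGWF (N : Net X) : Prop where
  isNet : IsNet N
  m0_sub : N.m0 ⊆ N.P
  m0_ne : N.m0.Nonempty
  m0_nopre : ∀ p ∈ N.m0, pre N p = ∅
  mf_sub : N.mf ⊆ N.P
  mf_ne : N.mf.Nonempty
  mf_nopost : ∀ p ∈ N.mf, post N p = ∅
  connected : ∀ x ∈ nodes N, ∃ s ∈ N.m0, ∃ f ∈ N.mf, pathRel N s x ∧ pathRel N x f

structure Sound (N : Net X) : Prop where
  proper : ∀ m ∈ reachable N N.m0, N.mf ∈ reachable N m
  clean : ∀ m ∈ reachable N N.m0, N.mf ⊆ m → m = N.mf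
  live : ∀ t ∈ N.T, ∃ m ∈ reachable N N.m0, enabled N m t

/-! ### Subnets, state machines, sequential components -/

def subnet (N : Net X) (A : Set X) : Net X where
  P := N.P ∩ A
  T := N.T ∩ A
  F := N.F ∩ (A ×ˢ A)
  m0 := N.m0 ∩ A
  mf := N.mf ∩ A

def nbh (N : Net X) (A : Set X) : Set X := {x | ∃ a ∈ A, (x, a) ∈ N.F ∨ (a, x) ∈ N.F}

def undirRel (N : Net X) (x y : X) : Prop := (x, y) ∈ N.F ∨ (y, x) ∈ N.F

def IsConnected (N : Net X) : Prop :=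
  ∀ x ∈ nodes N, ∀ y ∈ nodes N, Relation.ReflTransGen (undirRel N) x y

def IsStateMachine (N : Net X) : Prop :=
  IsConnected N ∧ ∀ t ∈ N.T, (∃! p, p ∈ pre N t) ∧ (∃! p, p ∈ post N t)

/-- `A` (a set of places), together with its neighborhood transitions, generates a
sequential component of `N`. -/
def IsSeqComponent (N : Net X) (A : Set X) : Prop :=
  A ⊆ N.P ∧ IsStateMachine (subnet N (A ∪ nbh N A)) ∧ (∃! p, p ∈ N.m0 ∩ A)

/-- State machine decomposability. -/
def SMD (N : Net X) : Prop := ∀ p ∈ N.P, ∃ A, IsSeqComponent N A ∧ p ∈ A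

/-! ### Input/output elements of subnets, acyclicity -/

def inputs (N : Net X) (A : Set X) : Set X :=
  {y ∈ A | (∃ z, z ∉ A ∧ (z, y) ∈ N.F) ∨ pre N y = ∅}

def outputs (N : Net X) (A : Set X) : Set X :=
  {y ∈ A | (∃ z, z ∉ A ∧ (y, z) ∈ N.F) ∨ post N y = ∅}

/-- The inverse image of a node `p2` under `φ`, within the nodes of `N1`. -/
def invA (N1 : Net X) (φ : X → Y) (p2 : Y) : Set X := nodes N1 ∩ φ ⁻¹' {p2}

def IsAcyclic (N : Net X) : Prop :=
  ∀ x, ¬ Relation.TransGen (fun a b => (a, b) ∈ N.F) x x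

/-! ### α-morphisms -/

structure AlphaMorphism (N1 : Net X) (N2 : Net Y) (φ : X → Y) : Prop where
  maps : φ '' nodes N1 ⊆ nodes N2
  surj : nodes N2 ⊆ φ '' nodes N1
  places : φ '' N1.P = N2.P
  init : φ '' N1.m0 = N2.m0
  tt : ∀ t1 ∈ N1.T, φ t1 ∈ N2.T →
    φ '' pre N1 t1 = pre N2 (φ t1) ∧ φ '' post N1 t1 = post N2 (φ t1)
  tp : ∀ t1 ∈ N1.T, φ t1 ∈ N2.P → φ '' (pre N1 t1 ∪ post N1 t1) = {φ t1}
  ref_acyclic : ∀ p2 ∈ N2.P, IsAcyclic (subnet N1 (invA N1 φ p2)) ∨ invA N1 φ p2 ⊆ N1.P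
  ref_in : ∀ p2 ∈ N2.P, ∀ p1 ∈ N1.P ∩ inputs N1 (invA N1 φ p2),
    φ '' pre N1 p1 ⊆ pre N2 p2 ∧ ((pre N2 p2).Nonempty → (pre N1 p1).Nonempty)
  ref_out : ∀ p2 ∈ N2.P, ∀ p1 ∈ N1.P ∩ outputs N1 (invA N1 φ p2),
    φ '' post N1 p1 = post N2 p2
  ref_int : ∀ p2 ∈ N2.P, ∀ p1 ∈ N1.P ∩ invA N1 φ p2,
    (p1 ∉ inputs N1 (invA N1 φ p2) → φ '' pre N1 p1 = {p2}) ∧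
    (p1 ∉ outputs N1 (invA N1 φ p2) → φ '' post N1 p1 = {p2})
  ref_seq : ∀ p2 ∈ N2.P, ∀ p1 ∈ N1.P ∩ invA N1 φ p2,
    ∃ A, IsSeqComponent N1 A ∧ p1 ∈ A ∧
      ∀ t1 ∈ N1.T, φ t1 ∈ pre N2 p2 ∪ post N2 p2 → t1 ∈ nbh N1 A

/-- `N1` is well-marked w.r.t. `φ : N1 → N2`: every input place of a subnet refining an
initially marked place of `N2` is initially marked in `N1`. -/
def WellMarked (N1 : Net X) (N2 : Net Y) (φ : X → Y) : Prop :=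
  ∀ p2 ∈ N2.m0, ∀ p1 ∈ N1.P ∩ inputs N1 (invA N1 φ p2), p1 ∈ N1.m0

/-! ### Labeled GWF-nets -/

/-- Asynchronous channel actions: `send c` is "c!", `recv c` is "c?". -/
inductive ChanAct (C : Type) : Type
  | send : C → ChanAct C
  | recv : C → ChanAct C

/-- A labeled net over channels `C` and synchronous action names `S`. -/
structure LNet (X C S : Type) extends Net X where
  h : X → Option (ChanAct C)
  l : X → Option S
  k : X → Option C

structure IsLGWF (N : LNet X C S) : Prop where
  gwf : IsGWF N.toNet
  h_dom : ∀ t, N.h t ≠ none → t ∈ N.T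
  l_dom : ∀ t, N.l t ≠ none → t ∈ N.T
  k_dom : ∀ p, N.k p ≠ none → p ∈ N.P
  hl_disj : ∀ t, N.h t = none ∨ N.l t = none
  k_inj : ∀ p q c, N.k p = some c → N.k q = some c → p = q
  chan_conn : ∀ t1 t2 c, N.h t1 = some (ChanAct.send c) → N.h t2 = some (ChanAct.recv c) →
    ∃ p, N.k p = some c ∧ (t1, p) ∈ N.F ∧ (p, t2) ∈ N.F
  chan_pre : ∀ p c, N.k p = some c →
    (pre N.toNet p).Nonempty ∧ ∀ t ∈ pre N.toNet p, N.h t = some (ChanAct.send c)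
  chan_post : ∀ p c, N.k p = some c →
    (post N.toNet p).Nonempty ∧ ∀ t ∈ post N.toNet p, N.h t = some (ChanAct.recv c)

/-! ### α̂-morphisms -/

structure AlphaHatMorphism (N1 : LNet X C S) (N2 : LNet Y C S) (φ : X → Y)
    extends AlphaMorphism N1.toNet N2.toNet φ : Prop where
  final : φ '' N1.mf = N2.mf
  lab_to_trans : ∀ t ∈ N1.T, (N1.h t ≠ none ∨ N1.l t ≠ none) → φ t ∈ N2.T
  h_pres : ∀ t ∈ N1.T, ∀ a, N1.h t = some a → N2.h (φ t) = some a
  l_pres : ∀ t ∈ N1.T, ∀ s, N1.l t = some s → N2.l (φ t) = some s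

/-! ### AS-composition -/

/-- Nodes of the AS-composition of a net over `X` and a net over `Y`:
nodes of the components, fresh channel places, and merged (synchronized) transitions. -/
abbrev CNode (X Y C : Type) : Type := (X ⊕ Y) ⊕ (C ⊕ X × Y)

def inj1 : X → CNode X Y C := fun x => Sum.inl (Sum.inl x)
def inj2 : Y → CNode X Y C := fun y => Sum.inl (Sum.inr y)
def injc : C → CNode X Y C := fun c => Sum.inr (Sum.inl c)
def injs : X × Y → CNode X Y C := fun q => Sum.inr (Sum.inr q)

/-- Pairs of transitions carrying a common synchronous label. -/
def syncPairs (N1 : LNet X C S) (N2 : LNet Y C S) : Set (X × Y) :=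
  {q | q.1 ∈ N1.T ∧ q.2 ∈ N2.T ∧ ∃ s, N1.l q.1 = some s ∧ N2.l q.2 = some s}

/-- Channels for which both a sending and a receiving transition occur in the composition. -/
def chanSet (N1 : LNet X C S) (N2 : LNet Y C S) : Set C :=
  {c | ((∃ t ∈ N1.T, N1.h t = some (ChanAct.send c)) ∨
        (∃ t ∈ N2.T, N2.h t = some (ChanAct.send c))) ∧
       ((∃ t ∈ N1.T, N1.h t = some (ChanAct.recv c)) ∨
        (∃ t ∈ N2.T, N2.h t = some (ChanAct.recv c)))}

def compF (N1 : LNet X C S) (N2 : LNet Y C S) : Set (CNode X Y C × CNode X Y C) :=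
  {z | (∃ p t, p ∈ N1.P ∧ N1.k p = none ∧ t ∈ N1.T ∧ N1.l t = none ∧
          (((p, t) ∈ N1.F ∧ z = (inj1 p, inj1 t)) ∨ ((t, p) ∈ N1.F ∧ z = (inj1 t, inj1 p)))) ∨
       (∃ p t, p ∈ N2.P ∧ N2.k p = none ∧ t ∈ N2.T ∧ N2.l t = none ∧
          (((p, t) ∈ N2.F ∧ z = (inj2 p, inj2 t)) ∨ ((t, p) ∈ N2.F ∧ z = (inj2 t, inj2 p)))) ∨
       (∃ p q, p ∈ N1.P ∧ N1.k p = none ∧ q ∈ syncPairs N1 N2 ∧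
          (((p, q.1) ∈ N1.F ∧ z = (inj1 p, injs q)) ∨ ((q.1, p) ∈ N1.F ∧ z = (injs q, inj1 p)))) ∨
       (∃ p q, p ∈ N2.P ∧ N2.k p = none ∧ q ∈ syncPairs N1 N2 ∧
          (((p, q.2) ∈ N2.F ∧ z = (inj2 p, injs q)) ∨ ((q.2, p) ∈ N2.F ∧ z = (injs q, inj2 p)))) ∨
       (∃ c t, c ∈ chanSet N1 N2 ∧ t ∈ N1.T ∧ N1.l t = none ∧
          ((N1.h t = some (ChanAct.send c) ∧ z = (inj1 t, injc c)) ∨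
           (N1.h t = some (ChanAct.recv c) ∧ z = (injc c, inj1 t)))) ∨
       (∃ c t, c ∈ chanSet N1 N2 ∧ t ∈ N2.T ∧ N2.l t = none ∧
          ((N2.h t = some (ChanAct.send c) ∧ z = (inj2 t, injc c)) ∨
           (N2.h t = some (ChanAct.recv c) ∧ z = (injc c, inj2 t))))}

/-- The AS-composition `N1 ⊛ N2` of two labeled nets. -/
noncomputable def AScomp (N1 : LNet X C S) (N2 : LNet Y C S) : LNet (CNode X Y C) C S where
  P := inj1 '' {p ∈ N1.P | N1.k p = none} ∪ inj2 '' {p ∈ N2.P | N2.k p = none} ∪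
       injc '' chanSet N1 N2
  T := inj1 '' {t ∈ N1.T | N1.l t = none} ∪ inj2 '' {t ∈ N2.T | N2.l t = none} ∪
       injs '' syncPairs N1 N2
  F := compF N1 N2
  m0 := inj1 '' N1.m0 ∪ inj2 '' N2.m0
  mf := inj1 '' N1.mf ∪ inj2 '' N2.mf
  h := fun z => match z with
    | Sum.inl (Sum.inl t) => N1.h t
    | Sum.inl (Sum.inr t) => N2.h t
    | _ => none
  l := fun z => match z with
    | Sum.inr (Sum.inr q) => N1.l q.1
    | _ => none
  k := fun z => match z with
    | Sum.inr (Sum.inl c) => if c ∈ chanSet N1 N2 then some c else none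
    | _ => none

/-! ### Isomorphism of labeled marked nets -/

def LIso (N : LNet X C S) (M : LNet Y C S) : Prop :=
  ∃ f : X → Y, Set.BijOn f (nodes N.toNet) (nodes M.toNet) ∧
    f '' N.P = M.P ∧ f '' N.T = M.T ∧
    (∀ x ∈ nodes N.toNet, ∀ y ∈ nodes N.toNet, ((x, y) ∈ N.F ↔ (f x, f y) ∈ M.F)) ∧
    f '' N.m0 = M.m0 ∧ f '' N.mf = M.mf ∧
    ∀ x ∈ nodes N.toNet, M.h (f x) = N.h x ∧ M.l (f x) = N.l x ∧ M.k (f x) = N.k x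

/-! ### Local nets (for the unfolding condition) -/

/-- The local net `S2(p2)`: `p2` with its neighborhood transitions, completed with
artificial input and output places. -/
noncomputable def localNet2 (N2 : Net Y) (p2 : Y) : Net (Y ⊕ (Y ⊕ Y)) where
  P := {Sum.inl p2} ∪ (fun t => Sum.inr (Sum.inl t)) '' pre N2 p2 ∪
       (fun t => Sum.inr (Sum.inr t)) '' post N2 p2
  T := Sum.inl '' (pre N2 p2 ∪ post N2 p2)
  F := {z | (∃ t ∈ pre N2 p2, z = (Sum.inr (Sum.inl t), Sum.inl t) ∨
              z = (Sum.inl t, Sum.inl p2)) ∨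
            (∃ t ∈ post N2 p2, z = (Sum.inl p2, Sum.inl t) ∨
              z = (Sum.inl t, Sum.inr (Sum.inr t)))}
  m0 := if pre N2 p2 = ∅ then {Sum.inl p2} else (fun t => Sum.inr (Sum.inl t)) '' pre N2 p2
  mf := if post N2 p2 = ∅ then {Sum.inl p2} else (fun t => Sum.inr (Sum.inr t)) '' post N2 p2

def preT (N1 : Net X) (N2 : Net Y) (φ : X → Y) (p2 : Y) : Set X :=
  {t ∈ N1.T | φ t ∈ pre N2 p2}

def postT (N1 : Net X) (N2 : Net Y) (φ : X → Y) (p2 : Y) : Set X :=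
  {t ∈ N1.T | φ t ∈ post N2 p2}

/-- The local net `S1(p2)`: the subnet of `N1` refining `p2` together with the inverse
images of the neighborhood transitions of `p2`, completed with artificial input and
output places. -/
noncomputable def localNet1 (N1 : Net X) (N2 : Net Y) (φ : X → Y) (p2 : Y) :
    Net (X ⊕ (X ⊕ X)) where
  P := Sum.inl '' (N1.P ∩ invA N1 φ p2) ∪
       (fun t => Sum.inr (Sum.inl t)) '' preT N1 N2 φ p2 ∪
       (fun t => Sum.inr (Sum.inr t)) '' postT N1 N2 φ p2
  T := Sum.inl '' ((N1.T ∩ invA N1 φ p2) ∪ preT N1 N2 φ p2 ∪ postT N1 N2 φ p2)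
  F := {z | (∃ x y, (x, y) ∈ N1.F ∧
              x ∈ invA N1 φ p2 ∪ preT N1 N2 φ p2 ∪ postT N1 N2 φ p2 ∧
              y ∈ invA N1 φ p2 ∪ preT N1 N2 φ p2 ∪ postT N1 N2 φ p2 ∧
              z = (Sum.inl x, Sum.inl y)) ∨
            (∃ t ∈ preT N1 N2 φ p2, z = (Sum.inr (Sum.inl t), Sum.inl t)) ∨
            (∃ t ∈ postT N1 N2 φ p2, z = (Sum.inl t, Sum.inr (Sum.inr t)))}
  m0 := if preT N1 N2 φ p2 = ∅ then Sum.inl '' (N1.P ∩ inputs N1 (invA N1 φ p2))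
        else (fun t => Sum.inr (Sum.inl t)) '' preT N1 N2 φ p2
  mf := if postT N1 N2 φ p2 = ∅ then Sum.inl '' (N1.P ∩ outputs N1 (invA N1 φ p2))
        else (fun t => Sum.inr (Sum.inr t)) '' postT N1 N2 φ p2

/-- The restriction of `φ` to local nets. -/
def localMap (φ : X → Y) : X ⊕ (X ⊕ X) → Y ⊕ (Y ⊕ Y) := Sum.map φ (Sum.map φ φ)

/-- `p2` is properly refined: its inverse image is not a set of places only. -/
def ProperlyRefined (N1 : Net X) (φ : X → Y) (p2 : Y) : Prop :=
  ¬ (invA N1 φ p2 ⊆ N1.P)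

/-! ### Occurrence nets, branching processes, unfoldings -/

def causal (O : Net W) : W → W → Prop :=
  fun x y => Relation.ReflTransGen (fun a b => (a, b) ∈ O.F) x y

def conflict (O : Net W) (x y : W) : Prop :=
  ∃ tx ty, tx ∈ O.T ∧ ty ∈ O.T ∧ tx ≠ ty ∧ (pre O tx ∩ pre O ty).Nonempty ∧
    causal O tx x ∧ causal O ty y

structure IsOccurrenceNet (O : Net W) : Prop where
  isNet : IsNet O
  pre_subsingleton : ∀ b ∈ O.P, (pre O b).Subsingleton
  antisymm : ∀ x y, causal O x y → causal O y x → x = y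
  finite_past : ∀ x ∈ nodes O, {y | causal O y x}.Finite
  no_self_conflict : ∀ x ∈ nodes O, ¬ conflict O x x

def minNodes (O : Net W) : Set W := {b ∈ O.P | pre O b = ∅}

structure IsBranchingProcess (N : Net X) (O : Net W) (π : W → X) : Prop where
  occ : IsOccurrenceNet O
  pl : ∀ b ∈ O.P, π b ∈ N.P
  tr : ∀ e ∈ O.T, π e ∈ N.T
  min_bij : Set.BijOn π (minNodes O) N.m0
  pre_bij : ∀ e ∈ O.T, Set.BijOn π (pre O e) (pre N (π e))
  post_bij : ∀ e ∈ O.T, Set.BijOn π (post O e) (post N (π e))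
  no_dup : ∀ e1 ∈ O.T, ∀ e2 ∈ O.T, pre O e1 = pre O e2 → π e1 = π e2 → e1 = e2

/-- `(O, u)` is the unfolding of `N`: the maximal branching process, i.e. every branching
process of `N` is isomorphic to a subnet of `O` compatibly with the folding `u`. -/
def IsUnfolding (N : Net X) (O : Net W) (u : W → X) : Prop :=
  IsBranchingProcess N O u ∧
  ∀ (W' : Type) (O' : Net W') (π' : W' → X), IsBranchingProcess N O' π' →
    ∃ j : W' → W, Set.InjOn j (nodes O') ∧ (∀ b ∈ O'.P, j b ∈ O.P) ∧
      (∀ e ∈ O'.T, j e ∈ O.T) ∧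
      (∀ x ∈ nodes O', ∀ y ∈ nodes O', ((x, y) ∈ O'.F ↔ (j x, j y) ∈ O.F)) ∧
      ∀ x ∈ nodes O', u (j x) = π' x

end PNets

namespace PNets

lemma arc_to_eq_or_arc {X Y : Type} (N1 : Net X) (N2 : Net Y) (φ : X → Y)
    (hnet1 : IsNet N1) (hφ : AlphaMorphism N1 N2 φ) :
    ∀ a b : X, (a, b) ∈ N1.F → φ a = φ b ∨ (φ a, φ b) ∈ N2.F := by
  intro a b hab
  rcases hnet1.flow_sub hab with h | h
  · obtain ⟨ha, hb⟩ := h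
    have hbnode : φ b ∈ nodes N2 := hφ.maps ⟨b, Or.inr hb, rfl⟩
    rcases hbnode with hP | hT
    · left
      have h1 : φ a ∈ φ '' (pre N1 b ∪ post N1 b) := ⟨a, Or.inl hab, rfl⟩
      rw [hφ.tp b hb hP] at h1
      exact h1
    · right
      have h1 : φ a ∈ φ '' pre N1 b := ⟨a, hab, rfl⟩
      rw [(hφ.tt b hb hT).1] at h1
      exact h1
  · obtain ⟨ha, hb⟩ := h
    have hanode : φ a ∈ nodes N2 := hφ.maps ⟨a, Or.inr ha, rfl⟩
    rcases hanode with hP | hT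
    · left
      have h1 : φ b ∈ φ '' (pre N1 a ∪ post N1 a) := ⟨b, Or.inr hab, rfl⟩
      rw [hφ.tp a ha hP] at h1
      exact h1.symm
    · right
      have h1 : φ b ∈ φ '' post N1 a := ⟨b, hab, rfl⟩
      rw [(hφ.tt a ha hT).2] at h1
      exact h1

lemma path_map {X Y : Type} (N1 : Net X) (N2 : Net Y) (φ : X → Y)
    (hnet1 : IsNet N1) (hφ : AlphaMorphism N1 N2 φ) :
    ∀ x y : X, pathRel N1 x y → pathRel N2 (φ x) (φ y) := by
  intro x y h
  induction h with
  | refl => exact Relation.ReflTransGen.refl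
  | tail _ hbc ih =>
    rcases arc_to_eq_or_arc N1 N2 φ hnet1 hφ _ _ hbc with heq | harc
    · rwa [← heq]
    · exact ih.tail harc

/-- α-morphisms preserve the structure of GWF-nets: if `N1` is a GWF-net,
then `N2` with initial marking `φ '' N1.m0 = N2.m0` and final marking `φ '' N1.mf` is a
GWF-net (in particular its initial places have empty presets, its final places have
empty postsets, and every node lies on a path from the initial to the final marking). -/
theorem alpha_preserves_gwf_structure
    {X Y : Type} (N1 : Net X) (N2 : Net Y) (φ : X → Y)
    (hnet1 : IsNet N1) (hnet2 : IsNet N2)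
    (smd1 : SMD N1) (smd2 : SMD N2) (safe1 : Safe N1) (safe2 : Safe N2)
    (hφ : AlphaMorphism N1 N2 φ)
    (hgwf1 : IsGWF N1) :
    N2.m0 = φ '' N1.m0 ∧ IsGWF { N2 with mf := φ '' N1.mf } := by
  have hinit : φ '' N1.m0 = N2.m0 := hφ.init
  refine ⟨hinit.symm, ?_⟩
  have hm0sub : N2.m0 ⊆ N2.P := by
    rw [← hinit, ← hφ.places]
    exact Set.image_mono (f := φ) hgwf1.m0_sub
  have hmfsub : φ '' N1.mf ⊆ N2.P := by
    rw [← hφ.places]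
    exact Set.image_mono (f := φ) hgwf1.mf_sub
  constructor
  · exact ⟨hnet2.disj, hnet2.flow_sub, hnet2.no_isolated, hnet2.t_pre,
      hnet2.t_post, hnet2.no_selfloop⟩
  · exact hm0sub
  · rw [← hinit]
    exact hgwf1.m0_ne.image φ
  · -- initial places have empty preset
    intro p2 hp2
    obtain ⟨p1, hp1, hp1e⟩ : p2 ∈ φ '' N1.m0 := by rwa [hinit]
    have hp1P : p1 ∈ N1.P := hgwf1.m0_sub hp1
    have hp2P : p2 ∈ N2.P := hm0sub hp2
    have hpre1 : pre N1 p1 = ∅ := hgwf1.m0_nopre p1 hp1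
    have hinA : p1 ∈ invA N1 φ p2 := ⟨Or.inl hp1P, by simp [hp1e]⟩
    have hin : p1 ∈ N1.P ∩ inputs N1 (invA N1 φ p2) :=
      ⟨hp1P, hinA, Or.inr hpre1⟩
    have := (hφ.ref_in p2 hp2P p1 hin).2
    by_contra h
    rw [← ne_eq, ← Set.nonempty_iff_ne_empty] at h
    have := this h
    rw [hpre1] at this
    exact Set.not_nonempty_empty this
  · exact hmfsub
  · exact hgwf1.mf_ne.image φ
  · -- final places have empty postset
    intro p2 hp2
    obtain ⟨p1, hp1, hp1e⟩ := hp2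
    have hp1P : p1 ∈ N1.P := hgwf1.mf_sub hp1
    have hp2P : p2 ∈ N2.P := hmfsub ⟨p1, hp1, hp1e⟩
    have hpost1 : post N1 p1 = ∅ := hgwf1.mf_nopost p1 hp1
    have hinA : p1 ∈ invA N1 φ p2 := ⟨Or.inl hp1P, by simp [hp1e]⟩
    have hout : p1 ∈ N1.P ∩ outputs N1 (invA N1 φ p2) :=
      ⟨hp1P, hinA, Or.inr hpost1⟩
    have := hφ.ref_out p2 hp2P p1 hout
    rw [hpost1, Set.image_empty] at this
    exact this.symm
  · -- connectedness
    intro x2 hx2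
    obtain ⟨x1, hx1, hx1e⟩ := hφ.surj hx2
    obtain ⟨s, hs, f, hf, hps, hpf⟩ := hgwf1.connected x1 hx1
    refine ⟨φ s, ?_, φ f, ⟨f, hf, rfl⟩, ?_, ?_⟩
    · show φ s ∈ N2.m0
      rw [← hinit]; exact ⟨s, hs, rfl⟩
    · rw [← hx1e]
      exact path_map N1 N2 φ hnet1 hφ _ _ hps
    · rw [← hx1e]
      exact path_map N1 N2 φ hnet1 hφ _ _ hpf

end PNets
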